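/- Let 𝒞 be a fuzzy covering of a finite nonempty set U. If lower_𝒞(X) ∩ lower_𝒞(Y) = lower_𝒞(X ∩ Y) for all fuzzy sets X, Y of U, then for any C1, C2 ∈ 𝒞, the fuzzy set C1 ∩ C2 is either identically zero or equal to the union (pointwise supremum) of some nonempty subfamily of 𝒞. -/

import Mathlib

instance : Fact ((0:ℝ) ≤ 1) := ⟨zero_le_one⟩

noncomputable section

/-- A fuzzy covering of `U`: a finite nonempty collection of fuzzy sets (maps `U → [0,1]`)
such that every member is non-null and every point has positive membership in some member. -/
def IsFuzzyCovering {U : Type*} (𝒞 : Set (U → unitInterval)) : Prop :=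
  𝒞.Finite ∧ 𝒞.Nonempty ∧ (∀ C ∈ 𝒞, ∃ x, 0 < C x) ∧ (∀ x, ∃ C ∈ 𝒞, 0 < C x)

/-- The neighborhood of `x`: pointwise infimum of all members with positive value at `x`. -/
def nbhd {U : Type*} (𝒞 : Set (U → unitInterval)) (x : U) : U → unitInterval :=
  ⨅ C ∈ {C ∈ 𝒞 | 0 < C x}, C

/-- The lower approximation of `X`: union of all members contained in `X`. -/
def lowerApprox {U : Type*} (𝒞 : Set (U → unitInterval)) (X : U → unitInterval) :
    U → unitInterval :=
  ⨆ C ∈ {C ∈ 𝒞 | C ≤ X}, C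

/-- The upper approximation of `X`. -/
def upperApprox {U : Type*} (𝒞 : Set (U → unitInterval)) (X : U → unitInterval) :
    U → unitInterval :=
  (⨆ x ∈ {x | 0 < X x ∧ lowerApprox 𝒞 X x = 0}, nbhd 𝒞 x) ⊔ lowerApprox 𝒞 X

/-- If the lower approximation operator distributes over intersections, then the intersection
of any two members of `𝒞` is identically zero or a union of a nonempty subfamily of `𝒞`. -/
theorem inter_eq_zero_or_union_of_lowerApprox_inf {U : Type*} [Fintype U] [Nonempty U]
    (𝒞 : Set (U → unitInterval)) (h𝒞 : IsFuzzyCovering 𝒞)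
    (h : ∀ X Y : U → unitInterval,
      lowerApprox 𝒞 X ⊓ lowerApprox 𝒞 Y = lowerApprox 𝒞 (X ⊓ Y)) :
    ∀ C₁ ∈ 𝒞, ∀ C₂ ∈ 𝒞,
      C₁ ⊓ C₂ = (fun _ => 0) ∨
      ∃ S : Set (U → unitInterval), S ⊆ 𝒞 ∧ S.Nonempty ∧ C₁ ⊓ C₂ = ⨆ C ∈ S, C := by
  have key : ∀ C ∈ 𝒞, lowerApprox 𝒞 C = C := by
    intro C hC
    apply le_antisymm
    · exact iSup₂_le fun D hD => hD.2
    · exact le_iSup₂_of_le C ⟨hC, le_rfl⟩ le_rfl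
  intro C₁ h₁ C₂ h₂
  have heq : C₁ ⊓ C₂ = ⨆ C ∈ {C ∈ 𝒞 | C ≤ C₁ ⊓ C₂}, C := by
    have hh := h C₁ C₂
    rw [key C₁ h₁, key C₂ h₂] at hh
    exact hh
  by_cases hS : ({C ∈ 𝒞 | C ≤ C₁ ⊓ C₂} : Set (U → unitInterval)).Nonempty
  · exact Or.inr ⟨_, fun C hC => hC.1, hS, heq⟩
  · left
    rw [Set.not_nonempty_iff_eq_empty] at hS
    rw [hS] at heq
    simp at heq
    rw [heq]
    funext x
    rfl

end
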